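/- Let ω be a nonempty open subset of (0, 2π), let α ∈ ω and let ρ ∈ (0, 1) be a quadratic irrational (irrational root of an integer quadratic) such that [α, α + ρπ] ⊆ ω. Define f : (0, 2π) → ℝ as the characteristic function of [α, α + ρπ], and for k ∈ ℤ set f_k = ∫₀^{2π} f(x) e^{-i k x} dx. Then f ∈ L²(0, 2π) with support contained in ω; f₀ = ρπ ≠ 0; for every k ∈ ℤ \ {0}, f_k = (e^{-i k α}/(i k)) · (1 − e^{-i k ρ π}) ≠ 0; and there exists a constant C̃ > 0 such that |f_k| ≥ C̃ / k² for all k ∈ ℤ \ {0}. -/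

import Mathlib

open Real MeasureTheory

noncomputable section

/-- The `k`-th Fourier coefficient `∫₀^{2π} f(x) e^{-ikx} dx` of `f : ℝ → ℝ`. -/
def fourierCoeff2π (f : ℝ → ℝ) (k : ℤ) : ℂ :=
  ∫ x in (0:ℝ)..(2*π), (f x : ℂ) * Complex.exp (-(Complex.I * (k:ℂ) * (x:ℂ)))

lemma norm_one_sub_exp' (θ : ℝ) :
    ‖1 - Complex.exp ((θ:ℂ) * Complex.I)‖ = 2 * |Real.sin (θ/2)| := by
  have h1 : ‖1 - Complex.exp ((θ:ℂ) * Complex.I)‖^2 = (2 * |Real.sin (θ/2)|)^2 := by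
    rw [Complex.sq_norm, Complex.normSq_apply, Complex.exp_mul_I]
    have hc : Real.cos θ = 1 - 2 * Real.sin (θ/2)^2 := by
      have := Real.sin_sq_eq_half_sub (θ/2)
      rw [show 2 * (θ/2) = θ by ring] at this
      linarith
    have habs : |Real.sin (θ/2)|^2 = Real.sin (θ/2)^2 := sq_abs _
    simp [Complex.cos_ofReal_re, ← Complex.ofReal_cos, ← Complex.ofReal_sin]
    nlinarith [habs, Real.sin_sq_add_cos_sq θ]
  have h2 : (0:ℝ) ≤ 2 * |Real.sin (θ/2)| := by positivity
  nlinarith [norm_nonneg (1 - Complex.exp ((θ:ℂ) * Complex.I))]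

lemma quad_bound' (ρ : ℝ) (hirr : Irrational ρ)
    (a b c : ℤ) (ha : a ≠ 0) (h : (a:ℝ) * ρ^2 + (b:ℝ) * ρ + (c:ℝ) = 0) :
    ∃ C : ℝ, 0 < C ∧ ∀ p q : ℤ, q ≠ 0 → C / (q:ℝ)^2 ≤ |ρ - p/q| := by
  have ha' : (a:ℝ) ≠ 0 := Int.cast_ne_zero.2 ha
  set ρ' : ℝ := -(b:ℝ)/a - ρ with hρ'
  have haρ' : (a:ℝ)*ρ' = -b - a*ρ := by rw [hρ']; field_simp
  have key : ∀ x : ℝ, (a:ℝ) * (x - ρ) * (x - ρ') = a*x^2 + b*x + c := by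
    intro x
    linear_combination (ρ - x) * haρ' - h
  have hM : (0:ℝ) < |ρ - ρ'| + 1 := by positivity
  set M := |ρ - ρ'| + 1 with hMdef
  refine ⟨min 1 (1/(|(a:ℝ)| * M)), lt_min one_pos (by positivity), ?_⟩
  intro p q hq
  have hq' : (q:ℝ) ≠ 0 := Int.cast_ne_zero.2 hq
  have habsq : (1:ℝ) ≤ |(q:ℝ)| := by
    rw [← Int.cast_abs]; exact_mod_cast Int.one_le_abs hq
  have hq2 : (1:ℝ) ≤ (q:ℝ)^2 := by nlinarith [sq_abs (q:ℝ), abs_nonneg (q:ℝ)]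
  have hq2pos : (0:ℝ) < (q:ℝ)^2 := by positivity
  have hdivN : (a:ℝ)*((p:ℝ)/q)^2 + b*((p:ℝ)/q) + c
      = ((a:ℝ)*(p:ℝ)^2 + b*(p:ℝ)*q + c*(q:ℝ)^2)/(q:ℝ)^2 := by
    field_simp
  have hNne : a*p^2 + b*p*q + c*q^2 ≠ 0 := by
    intro h0
    have h0' : (a:ℝ)*(p:ℝ)^2 + b*(p:ℝ)*q + c*(q:ℝ)^2 = 0 := by
      exact_mod_cast congrArg (Int.cast : ℤ → ℝ) h0
    have hx : (a:ℝ) * ((p:ℝ)/q - ρ) * ((p:ℝ)/q - ρ') = 0 := by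
      rw [key, hdivN, h0', zero_div]
    rcases mul_eq_zero.1 hx with hx1 | hx2
    · rcases mul_eq_zero.1 hx1 with h' | h'
      · exact ha' h'
      · exact hirr ⟨(p:ℚ)/q, by push_cast; linarith [sub_eq_zero.1 h']⟩
    · have : ρ = -(b:ℝ)/a - (p:ℝ)/q := by
        have := sub_eq_zero.1 hx2
        rw [hρ'] at this
        linarith
      refine hirr ⟨-(b:ℚ)/a - (p:ℚ)/q, ?_⟩
      rw [this]; push_cast; ring
  have hN1 : (1:ℝ) ≤ |(a:ℝ)*(p:ℝ)^2 + b*(p:ℝ)*q + c*(q:ℝ)^2| := by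
    have : (1:ℝ) ≤ |((a*p^2 + b*p*q + c*q^2 : ℤ):ℝ)| := by
      rw [← Int.cast_abs]; exact_mod_cast Int.one_le_abs hNne
    convert this using 2; push_cast; ring
  have hprod : |(p:ℝ)/q - ρ| * |(p:ℝ)/q - ρ'| ≥ 1 / (|(a:ℝ)| * (q:ℝ)^2) := by
    have : |(a:ℝ)| * (|(p:ℝ)/q - ρ| * |(p:ℝ)/q - ρ'|) * (q:ℝ)^2
        = |(a:ℝ)*(p:ℝ)^2 + b*(p:ℝ)*q + c*(q:ℝ)^2| := by
      rw [← abs_of_pos hq2pos, ← abs_mul, ← abs_mul, ← abs_mul]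
      congr 1
      rw [show (a:ℝ) * (((p:ℝ)/q - ρ) * ((p:ℝ)/q - ρ')) * (q:ℝ)^2
            = ((a:ℝ) * ((p:ℝ)/q - ρ) * ((p:ℝ)/q - ρ')) * (q:ℝ)^2 by ring, key, hdivN,
          div_mul_cancel₀ _ (pow_ne_zero 2 hq'), abs_of_pos hq2pos]
    rw [ge_iff_le, div_le_iff₀ (by positivity)]
    nlinarith [abs_nonneg ((a:ℝ)*(p:ℝ)^2 + b*(p:ℝ)*q + c*(q:ℝ)^2)]
  by_cases hcase : 1 ≤ |ρ - (p:ℝ)/q|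
  · calc min 1 (1/(|(a:ℝ)| * M)) / (q:ℝ)^2 ≤ 1 / (q:ℝ)^2 := by
          gcongr; exact min_le_left _ _
        _ ≤ 1 := by rw [div_le_one hq2pos]; exact hq2
        _ ≤ _ := hcase
  · push_neg at hcase
    have hfar : |(p:ℝ)/q - ρ'| ≤ M := by
      have : |(p:ℝ)/q - ρ'| ≤ |(p:ℝ)/q - ρ| + |ρ - ρ'| := abs_sub_le _ _ _
      rw [abs_sub_comm ((p:ℝ)/q) ρ] at this
      rw [hMdef]; linarith
    have hlow : 1 / (|(a:ℝ)| * M * (q:ℝ)^2) ≤ |ρ - (p:ℝ)/q| := by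
      rw [abs_sub_comm]
      have h2 : 1 / (|(a:ℝ)| * (q:ℝ)^2) ≤ |(p:ℝ)/q - ρ| * M := by
        calc 1 / (|(a:ℝ)| * (q:ℝ)^2) ≤ |(p:ℝ)/q - ρ| * |(p:ℝ)/q - ρ'| := hprod
          _ ≤ |(p:ℝ)/q - ρ| * M := mul_le_mul_of_nonneg_left hfar (abs_nonneg _)
      rw [div_le_iff₀ (by positivity)] at h2 ⊢
      nlinarith [abs_nonneg ((p:ℝ)/q - ρ)]
    calc min 1 (1/(|(a:ℝ)| * M)) / (q:ℝ)^2 ≤ (1/(|(a:ℝ)| * M)) / (q:ℝ)^2 := by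
          gcongr; exact min_le_right _ _
      _ = 1 / (|(a:ℝ)| * M * (q:ℝ)^2) := by field_simp
      _ ≤ _ := hlow

lemma sin_lb' (ρ C : ℝ) (hb : ∀ p q : ℤ, q ≠ 0 → C/(q:ℝ)^2 ≤ |ρ - p/q|)
    (k : ℤ) (hk : k ≠ 0) : C / |(k:ℝ)| ≤ |Real.sin (π * ((k:ℝ) * ρ / 2))| := by
  have hk' : (k:ℝ) ≠ 0 := Int.cast_ne_zero.2 hk
  have hkpos : (0:ℝ) < |(k:ℝ)| := abs_pos.2 hk'
  set t := (k:ℝ)*ρ/2 with ht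
  set n := round t with hn
  have hδ : |t - n| ≤ 1/2 := abs_sub_round t
  have hδlb : C/(2*|(k:ℝ)|) ≤ |t - (n:ℝ)| := by
    have hb' := hb (2*n) k hk
    have heq : |t - (n:ℝ)| = |(k:ℝ)|/2 * |ρ - ((2*n:ℤ):ℝ)/k| := by
      have h5 : t - (n:ℝ) = (k:ℝ)/2 * (ρ - ((2*n:ℤ):ℝ)/k) := by
        push_cast; field_simp; ring
      rw [h5, abs_mul, abs_div, abs_two]
    rw [heq]
    rw [div_le_iff₀ (by positivity)] at hb' ⊢
    calc C ≤ |ρ - ((2*n:ℤ):ℝ)/k| * (k:ℝ)^2 := hb'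
      _ = |(k:ℝ)|/2 * |ρ - ((2*n:ℤ):ℝ)/k| * (2*|(k:ℝ)|) := by
          rw [← sq_abs (k:ℝ)]; ring
  have hsin : |Real.sin (π*t)| = |Real.sin (π*(t - n))| := by
    rw [show π * t = π*(t-(n:ℝ)) + (n:ℝ)*π by ring, Real.sin_add_int_mul_pi]
    rw [abs_mul]
    have h5 : |((-1:ℝ))^n| = 1 := by
      rcases Int.even_or_odd n with h | h
      · rw [h.neg_one_zpow]; simp
      · rw [Odd.neg_one_zpow h]; simp
    rw [h5, one_mul]
  rw [hsin]
  have h2 : |π*(t-(n:ℝ))| ≤ π/2 := by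
    rw [abs_mul, abs_of_pos pi_pos]
    nlinarith [pi_pos]
  have h3 := Real.mul_abs_le_abs_sin h2
  have h4 : 2/π*|π*(t-(n:ℝ))| = 2*|t-(n:ℝ)| := by
    rw [abs_mul, abs_of_pos pi_pos]
    field_simp
  rw [h4] at h3
  calc C/|(k:ℝ)| = 2 * (C/(2*|(k:ℝ)|)) := by field_simp
    _ ≤ 2 * |t - (n:ℝ)| := by linarith
    _ ≤ _ := h3

lemma indicator_integral' (α β : ℝ) (hαβ : α ≤ β) (hsub : Set.Icc α β ⊆ Set.Ioc 0 (2*π))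
    (g : ℝ → ℂ) :
    (∫ x in (0:ℝ)..(2*π), ((Set.indicator (Set.Icc α β) (fun _ => (1:ℝ)) x : ℝ) : ℂ) * g x)
      = ∫ x in α..β, g x := by
  have h2π : (0:ℝ) ≤ 2*π := by positivity
  have hfun : ∀ x : ℝ, ((Set.indicator (Set.Icc α β) (fun _ => (1:ℝ)) x : ℝ) : ℂ) * g x
      = Set.indicator (Set.Icc α β) g x := by
    intro x
    by_cases hx : x ∈ Set.Icc α β
    · simp [Set.indicator_of_mem hx]
    · simp [Set.indicator_of_notMem hx]
  rw [intervalIntegral.integral_of_le h2π]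
  simp_rw [hfun]
  rw [setIntegral_indicator measurableSet_Icc, Set.inter_eq_right.2 hsub,
    integral_Icc_eq_integral_Ioc, ← intervalIntegral.integral_of_le hαβ]

/-- the indicator of `[α, α+ρπ]` (with `ρ` a quadratic irrational) is an
`L²` function supported in `ω` all of whose Fourier coefficients are nonzero, with
`|f_k| ≥ C̃/k²`. -/
theorem indicator_fourier_coefficients
    (ω : Set ℝ) (hωopen : IsOpen ω) (hωne : ω.Nonempty) (hωsub : ω ⊆ Set.Ioo 0 (2*π))
    (α ρ : ℝ) (hα : α ∈ ω) (hρ : ρ ∈ Set.Ioo (0:ℝ) 1) (hirr : Irrational ρ)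
    (hquad : ∃ a b c : ℤ, a ≠ 0 ∧ (a:ℝ) * ρ^2 + (b:ℝ) * ρ + (c:ℝ) = 0)
    (hsub : Set.Icc α (α + ρ*π) ⊆ ω)
    (f : ℝ → ℝ) (hf : f = Set.indicator (Set.Icc α (α + ρ*π)) (fun _ => (1:ℝ))) :
    MemLp f 2 (volume.restrict (Set.Ioo 0 (2*π))) ∧
    Function.support f ⊆ ω ∧
    fourierCoeff2π f 0 = ((ρ*π : ℝ) : ℂ) ∧
    ((ρ*π : ℝ) : ℂ) ≠ 0 ∧
    (∀ k : ℤ, k ≠ 0 →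
      fourierCoeff2π f k
        = Complex.exp (-(Complex.I * (k:ℂ) * (α:ℂ))) / (Complex.I * (k:ℂ)) *
            (1 - Complex.exp (-(Complex.I * (k:ℂ) * ((ρ*π : ℝ) : ℂ)))) ∧
      fourierCoeff2π f k ≠ 0) ∧
    (∃ C : ℝ, 0 < C ∧ ∀ k : ℤ, k ≠ 0 → C / (k:ℝ)^2 ≤ ‖fourierCoeff2π f k‖) := by
  obtain ⟨hρ0, hρ1⟩ := hρ
  have hρπ : 0 < ρ*π := by positivity
  have hαβ : α ≤ α + ρ*π := by linarith
  set β := α + ρ*π with hβ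
  have hIccIoo : Set.Icc α β ⊆ Set.Ioo 0 (2*π) := fun x hx => hωsub (hsub hx)
  have hIccIoc : Set.Icc α β ⊆ Set.Ioc 0 (2*π) := fun x hx =>
    Set.Ioo_subset_Ioc_self (hIccIoo hx)
  -- the integral identity
  have hint : ∀ k : ℤ, fourierCoeff2π f k
      = ∫ x in α..β, Complex.exp (-(Complex.I * (k:ℂ) * (x:ℂ))) := by
    intro k
    rw [fourierCoeff2π, hf]
    exact indicator_integral' α β hαβ hIccIoc _
  -- zeroth coefficient
  have h0 : fourierCoeff2π f 0 = ((ρ*π : ℝ) : ℂ) := by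
    rw [hint 0]
    simp [hβ]
  have hρπne : ((ρ*π : ℝ) : ℂ) ≠ 0 := by
    rw [Complex.ofReal_ne_zero]
    positivity
  -- formula for k ≠ 0
  have hformula : ∀ k : ℤ, k ≠ 0 →
      fourierCoeff2π f k
        = Complex.exp (-(Complex.I * (k:ℂ) * (α:ℂ))) / (Complex.I * (k:ℂ)) *
            (1 - Complex.exp (-(Complex.I * (k:ℂ) * ((ρ*π : ℝ) : ℂ)))) := by
    intro k hk
    have hk' : (k:ℂ) ≠ 0 := Int.cast_ne_zero.2 hk
    have hc : -(Complex.I * (k:ℂ)) ≠ 0 := by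
      simp [Complex.I_ne_zero, hk']
    rw [hint k]
    have : ∀ x : ℝ, -(Complex.I * (k:ℂ) * (x:ℂ)) = (-(Complex.I * (k:ℂ))) * (x:ℂ) := by
      intro x; ring
    simp_rw [this]
    rw [integral_exp_mul_complex hc]
    rw [hβ]
    push_cast
    rw [show (-(Complex.I * (k:ℂ))) * ((α:ℂ) + (ρ:ℂ)*(π:ℂ))
        = (-(Complex.I * (k:ℂ))) * (α:ℂ) + (-(Complex.I * (k:ℂ))) * ((ρ:ℂ)*(π:ℂ)) by ring,
      Complex.exp_add]
    have hIk : Complex.I * (k:ℂ) ≠ 0 := by simp [Complex.I_ne_zero, hk']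
    field_simp
    ring
  -- the norm of f_k
  obtain ⟨a, b, c, ha, habc⟩ := hquad
  obtain ⟨C, hCpos, hC⟩ := quad_bound' ρ hirr a b c ha habc
  have hnorm : ∀ k : ℤ, k ≠ 0 → 2*C / (k:ℝ)^2 ≤ ‖fourierCoeff2π f k‖ := by
    intro k hk
    have hk' : (k:ℂ) ≠ 0 := Int.cast_ne_zero.2 hk
    have hkr : (k:ℝ) ≠ 0 := Int.cast_ne_zero.2 hk
    have hkabs : (0:ℝ) < |(k:ℝ)| := abs_pos.2 hkr
    rw [hformula k hk, norm_mul, norm_div]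
    have h1 : ‖Complex.exp (-(Complex.I * (k:ℂ) * (α:ℂ)))‖ = 1 := by
      rw [Complex.norm_exp]
      simp
    have h2 : ‖Complex.I * (k:ℂ)‖ = |(k:ℝ)| := by
      rw [norm_mul, Complex.norm_I, one_mul, Complex.norm_intCast]
    have h3 : ‖1 - Complex.exp (-(Complex.I * (k:ℂ) * ((ρ*π : ℝ) : ℂ)))‖
        = 2 * |Real.sin (π * ((k:ℝ) * ρ / 2))| := by
      rw [show -(Complex.I * (k:ℂ) * ((ρ*π : ℝ) : ℂ))
          = ((-((k:ℝ)*(ρ*π)) : ℝ) : ℂ) * Complex.I by push_cast; ring]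
      rw [norm_one_sub_exp' (-((k:ℝ)*(ρ*π)))]
      congr 1
      rw [show -((k:ℝ)*(ρ*π))/2 = -(π * ((k:ℝ) * ρ / 2)) by ring, Real.sin_neg, abs_neg]
    rw [h1, h2, h3]
    have h4 := sin_lb' ρ C hC k hk
    have h5 : (k:ℝ)^2 = |(k:ℝ)| * |(k:ℝ)| := by rw [← sq_abs]; ring
    rw [h5]
    calc 2*C / (|(k:ℝ)| * |(k:ℝ)|) = 1/|(k:ℝ)| * (2*(C/|(k:ℝ)|)) := by
          field_simp
          try ring
      _ ≤ 1/|(k:ℝ)| * (2*|Real.sin (π * ((k:ℝ) * ρ / 2))|) := by gcongr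
      _ = _ := by ring
  refine ⟨?_, ?_, h0, hρπne, fun k hk => ⟨hformula k hk, ?_⟩, ⟨2*C, by positivity, hnorm⟩⟩
  · rw [hf]
    refine memLp_indicator_const 2 measurableSet_Icc 1 (Or.inr ?_)
    rw [Measure.restrict_apply measurableSet_Icc]
    exact ((measure_mono (Set.inter_subset_right)).trans_lt measure_Ioo_lt_top).ne
  · rw [hf]
    exact (Set.support_indicator_subset).trans hsub
  · intro hzero
    have h' := hnorm k hk
    rw [hzero, norm_zero] at h'
    have hkr : (k:ℝ) ≠ 0 := Int.cast_ne_zero.2 hk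
    have hk2 : (0:ℝ) < (k:ℝ)^2 := by
      rw [← sq_abs]; exact pow_pos (abs_pos.2 hkr) 2
    have hpos : 0 < 2*C / (k:ℝ)^2 := div_pos (by positivity) hk2
    linarith
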